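/- arXiv:2605.21711 — 3 statements merged into one kernel-verified Lean document; each statement's English description precedes it below -/
import Mathlib

section
/- Let E be a Banach space with the primary factorisation property, and let T, S ∈ B(E). If the identity Id_E factors through neither T nor S, then Id_E does not factor through T + S. (Equivalently, the set of operators through which the identity does not factor is closed under addition.) -/
/-- In a Banach space `E` with the primary factorisation property,
if the identity factors through neither `T` nor `S`, then it does not factor through
`T + S`. (Multiplication in `E →L[ℝ] E` is composition, `1` is the identity.) -/
theorem not_factors_add
    {E : Type*} [NormedAddCommGroup E] [NormedSpace ℝ E] [CompleteSpace E]
    (hPFP : ∀ T : E →L[ℝ] E,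
      (∃ A B : E →L[ℝ] E, A * T * B = 1) ∨ (∃ A B : E →L[ℝ] E, A * (1 - T) * B = 1))
    (T S : E →L[ℝ] E)
    (hT : ¬ ∃ A B : E →L[ℝ] E, A * T * B = 1)
    (hS : ¬ ∃ A B : E →L[ℝ] E, A * S * B = 1) :
    ¬ ∃ A B : E →L[ℝ] E, A * (T + S) * B = 1 := by
  rintro ⟨A, B, hAB⟩
  have hsplit : A * T * B + A * S * B = 1 := by
    rw [← hAB]; noncomm_ring
  rcases hPFP (A * T * B) with ⟨C, D, hCD⟩ | ⟨C, D, hCD⟩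
  · exact hT ⟨C * A, B * D, by rw [← hCD]; noncomm_ring⟩
  · have h1 : 1 - A * T * B = A * S * B := by
      rw [← hsplit]; noncomm_ring
    rw [h1] at hCD
    exact hS ⟨C * A, B * D, by rw [← hCD]; noncomm_ring⟩
end

section
/- Let (x_n) be a sequence in ℓ∞ such that for some K > 0 and every finite set F ⊆ ℕ and scalars (λ_n)_{n∈F}, ‖Σ_{n∈F} λ_n x_n‖ ≤ K · max_{n∈F} |λ_n|. Then for every m ∈ ℕ, the sequence of m-th coordinates satisfies lim_{n→∞} x_n(m) = 0. -/
lemma real_sign_mul_self (t : ℝ) : Real.sign t * t = |t| := by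
  rcases lt_trichotomy t 0 with h | h | h
  · rw [Real.sign_of_neg h, abs_of_neg h]; ring
  · simp [h]
  · rw [Real.sign_of_pos h, abs_of_pos h]; ring

/-- If `(x n)` is a sequence in `ℓ∞` whose finite linear combinations are
dominated by `K` times the maximum of the coefficients, then each coordinate sequence
`n ↦ x n m` tends to `0`. -/
theorem linfty_coord_tendsto_zero
    (x : ℕ → lp (fun _ : ℕ => ℝ) ⊤) (K : ℝ) (hK : 0 < K)
    (hdom : ∀ (F : Finset ℕ) (l : ℕ → ℝ) (c : ℝ), (∀ n ∈ F, |l n| ≤ c) →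
      ‖∑ n ∈ F, l n • x n‖ ≤ K * c) :
    ∀ m : ℕ, Filter.Tendsto (fun n => (x n : ∀ _ : ℕ, ℝ) m) Filter.atTop (nhds 0) := by
  intro m
  have key : ∀ ε : ℝ, 0 < ε → {n : ℕ | ε ≤ |(x n : ∀ _ : ℕ, ℝ) m|}.Finite := by
    intro ε hε
    by_contra hinf
    rw [← Set.not_infinite, not_not] at hinf
    obtain ⟨N, hN⟩ := exists_nat_gt (K / ε)
    obtain ⟨F, hFsub, hFcard⟩ := hinf.exists_subset_card_eq N
    set l : ℕ → ℝ := fun n => Real.sign ((x n : ∀ _ : ℕ, ℝ) m) with hl_def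
    have hl : ∀ n ∈ F, |l n| ≤ 1 := by
      intro n _
      rcases Real.sign_apply_eq ((x n : ∀ _ : ℕ, ℝ) m) with h | h | h <;>
        simp [l, h]
    have hnorm := hdom F l 1 hl
    have hcoord : |((∑ n ∈ F, l n • x n : lp (fun _ : ℕ => ℝ) ⊤) : ∀ _ : ℕ, ℝ) m|
        ≤ ‖∑ n ∈ F, l n • x n‖ :=
      by have h := lp.norm_apply_le_norm ENNReal.top_ne_zero (∑ n ∈ F, l n • x n) m; rwa [Real.norm_eq_abs] at h
    have hsum : ((∑ n ∈ F, l n • x n : lp (fun _ : ℕ => ℝ) ⊤) : ∀ _ : ℕ, ℝ) m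
        = ∑ n ∈ F, |(x n : ∀ _ : ℕ, ℝ) m| := by
      rw [lp.coeFn_sum, Finset.sum_apply]
      refine Finset.sum_congr rfl fun n _ => ?_
      rw [lp.coeFn_smul]
      simpa using real_sign_mul_self ((x n : ∀ _ : ℕ, ℝ) m)
    have hlower : (N : ℝ) * ε ≤ ∑ n ∈ F, |(x n : ∀ _ : ℕ, ℝ) m| := by
      calc (N : ℝ) * ε = ∑ _n ∈ F, ε := by
            rw [Finset.sum_const, hFcard, nsmul_eq_mul]
        _ ≤ _ := Finset.sum_le_sum fun n hn => hFsub hn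
    have hKlt : K < (N : ℝ) * ε := by
      rw [div_lt_iff₀ hε] at hN; linarith
    have : (N : ℝ) * ε ≤ K := by
      calc (N : ℝ) * ε ≤ ∑ n ∈ F, |(x n : ∀ _ : ℕ, ℝ) m| := hlower
        _ ≤ |((∑ n ∈ F, l n • x n : lp (fun _ : ℕ => ℝ) ⊤) : ∀ _ : ℕ, ℝ) m| := by
            rw [hsum]; exact le_abs_self _
        _ ≤ ‖∑ n ∈ F, l n • x n‖ := hcoord
        _ ≤ K * 1 := hnorm
        _ = K := mul_one K
    linarith
  rw [Metric.tendsto_atTop]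
  intro ε hε
  obtain ⟨N, hN⟩ := (key ε hε).bddAbove
  refine ⟨N + 1, fun n hn => ?_⟩
  rw [Real.dist_eq, sub_zero]
  by_contra hcon
  push_neg at hcon
  have : n ≤ N := hN hcon
  omega
end

section
/- Let X be quasi-reflexive of order one and X = Y ⊕ Z a direct sum decomposition into closed subspaces. Then exactly one of Y, Z is reflexive, and the non-reflexive summand W satisfies dim(W**/κ_W(W)) = 1 (it is quasi-reflexive of order one). -/
open NormedSpace

noncomputable section QR18aux

namespace QR18

variable {E F G : Type*} [NormedAddCommGroup E] [NormedSpace ℝ E]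
  [NormedAddCommGroup F] [NormedSpace ℝ F] [NormedAddCommGroup G] [NormedSpace ℝ G]

/-- Transpose of a continuous linear map. -/
def tr (f : E →L[ℝ] F) : StrongDual ℝ F →L[ℝ] StrongDual ℝ E :=
  (ContinuousLinearMap.compSL E F ℝ (RingHom.id ℝ) (RingHom.id ℝ)).flip f

@[simp] lemma tr_apply (f : E →L[ℝ] F) (g : StrongDual ℝ F) : tr f g = g.comp f := rfl

lemma tr_add (f g : E →L[ℝ] F) : tr (f + g) = tr f + tr g :=
  map_add ((ContinuousLinearMap.compSL E F ℝ (RingHom.id ℝ) (RingHom.id ℝ)).flip) f g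

lemma tr_zero : tr (0 : E →L[ℝ] F) = 0 :=
  map_zero ((ContinuousLinearMap.compSL E F ℝ (RingHom.id ℝ) (RingHom.id ℝ)).flip)

lemma tr_id : tr (ContinuousLinearMap.id ℝ E) = ContinuousLinearMap.id ℝ (StrongDual ℝ E) := by
  ext g x; rfl

lemma tr_comp (g : F →L[ℝ] G) (f : E →L[ℝ] F) :
    tr (g.comp f) = (tr f).comp (tr g) := by
  ext h x; rfl

/-- The double transpose (bidual map). -/
def bid (f : E →L[ℝ] F) : StrongDual ℝ (StrongDual ℝ E) →L[ℝ] StrongDual ℝ (StrongDual ℝ F) := tr (tr f)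

lemma bid_id : bid (ContinuousLinearMap.id ℝ E)
    = ContinuousLinearMap.id ℝ (StrongDual ℝ (StrongDual ℝ E)) := by
  unfold bid; rw [tr_id, tr_id]

lemma bid_zero : bid (0 : E →L[ℝ] F) = 0 := by
  unfold bid; rw [tr_zero, tr_zero]

instance instContinuousAddBidual : ContinuousAdd (StrongDual ℝ (StrongDual ℝ F)) :=
  by
    haveI h : IsTopologicalAddGroup (StrongDual ℝ (StrongDual ℝ F)) := inferInstance
    exact h.toContinuousAdd

lemma bid_add (f g : E →L[ℝ] F) : bid (f + g) = bid f + bid g := by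
  unfold bid; rw [tr_add, tr_add]

lemma bid_comp (g : F →L[ℝ] G) (f : E →L[ℝ] F) :
    bid (g.comp f) = (bid g).comp (bid f) := by
  unfold bid; rw [tr_comp, tr_comp]

lemma bid_incl (f : E →L[ℝ] F) (x : E) :
    bid f (inclusionInDoubleDual ℝ E x) = inclusionInDoubleDual ℝ F (f x) := by
  ext g; rfl

/-- Induced map on the bidual quotients. -/
def qmap (f : E →L[ℝ] F) :
    (StrongDual ℝ (StrongDual ℝ E) ⧸ LinearMap.range (inclusionInDoubleDual ℝ E).toLinearMap) →ₗ[ℝ]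
    (StrongDual ℝ (StrongDual ℝ F) ⧸ LinearMap.range (inclusionInDoubleDual ℝ F).toLinearMap) :=
  Submodule.liftQ _
    ((LinearMap.range (inclusionInDoubleDual ℝ F).toLinearMap).mkQ.comp (bid f).toLinearMap)
    (by
      rintro Φ ⟨x, rfl⟩
      simp only [LinearMap.mem_ker, LinearMap.comp_apply, ContinuousLinearMap.coe_coe,
        Submodule.mkQ_apply, bid_incl]
      exact (Submodule.Quotient.mk_eq_zero _).2 (LinearMap.mem_range_self _ _))

lemma qmap_mk (f : E →L[ℝ] F) (Φ : StrongDual ℝ (StrongDual ℝ E)) :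
    qmap f (Submodule.Quotient.mk Φ) = Submodule.Quotient.mk (bid f Φ) := rfl

end QR18

end QR18aux

open QR18

set_option maxHeartbeats 2000000 in
set_option synthInstance.maxHeartbeats 1000000 in
/-- Let `X` be quasi-reflexive of order one and `X = Y ⊕ Z` a topological
direct sum decomposition into closed subspaces.  Then exactly one of `Y, Z` is reflexive
(canonical embedding into the bidual surjective), and the non-reflexive summand is itself
quasi-reflexive of order one. -/
theorem summand_quasiReflexive_of_quasiReflexive
    {X : Type*} [NormedAddCommGroup X] [NormedSpace ℝ X] [CompleteSpace X]
    (hX : Module.rank ℝ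
      ((StrongDual ℝ (StrongDual ℝ X)) ⧸ LinearMap.range (inclusionInDoubleDual ℝ X).toLinearMap) = 1)
    (Y Z : Subspace ℝ X)
    (hYc : IsClosed (Y : Set X)) (hZc : IsClosed (Z : Set X))
    (hcompl : IsCompl Y Z) :
    (Function.Surjective (inclusionInDoubleDual ℝ Y) ∧
      ¬ Function.Surjective (inclusionInDoubleDual ℝ Z) ∧
      Module.rank ℝ
        ((StrongDual ℝ (StrongDual ℝ Z)) ⧸ LinearMap.range (inclusionInDoubleDual ℝ Z).toLinearMap) = 1) ∨
    (¬ Function.Surjective (inclusionInDoubleDual ℝ Y) ∧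
      Function.Surjective (inclusionInDoubleDual ℝ Z) ∧
      Module.rank ℝ
        ((StrongDual ℝ (StrongDual ℝ Y)) ⧸ LinearMap.range (inclusionInDoubleDual ℝ Y).toLinearMap) = 1) := by
  classical
  haveI : CompleteSpace Y := hYc.completeSpace_coe
  haveI : CompleteSpace Z := hZc.completeSpace_coe
  -- the continuous linear equivalence Y × Z ≃ X
  set f : (Y × Z) →L[ℝ] X := Y.subtypeL.coprod Z.subtypeL with hf
  have hfeq : (f : (Y × Z) →ₗ[ℝ] X) = (Submodule.prodEquivOfIsCompl Y Z hcompl : (Y × Z) →ₗ[ℝ] X) := by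
    rw [Submodule.coe_prodEquivOfIsCompl]; rfl
  have hbij : Function.Bijective f := by
    have : (f : (Y × Z) → X) = (Submodule.prodEquivOfIsCompl Y Z hcompl : (Y × Z) → X) := by
      ext u; exact DFunLike.congr_fun hfeq u
    rw [this]
    exact (Submodule.prodEquivOfIsCompl Y Z hcompl).bijective
  let e : (Y × Z) ≃L[ℝ] X := ContinuousLinearEquiv.ofBijective f
    (LinearMap.ker_eq_bot.2 hbij.1) (LinearMap.range_eq_top.2 hbij.2)
  have he : ∀ u : Y × Z, e u = f u := fun u => rfl
  let p : X →L[ℝ] Y := (ContinuousLinearMap.fst ℝ Y Z).comp (e.symm : X →L[ℝ] Y × Z)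
  let q : X →L[ℝ] Z := (ContinuousLinearMap.snd ℝ Y Z).comp (e.symm : X →L[ℝ] Y × Z)
  have hsymmY : ∀ y : Y, e.symm (y : X) = (y, 0) := by
    intro y
    rw [ContinuousLinearEquiv.symm_apply_eq, he]
    simp [hf]
  have hsymmZ : ∀ z : Z, e.symm (z : X) = (0, z) := by
    intro z
    rw [ContinuousLinearEquiv.symm_apply_eq, he]
    simp [hf]
  have hpi : p.comp Y.subtypeL = ContinuousLinearMap.id ℝ Y := by
    ext y; simp [p, hsymmY y]
  have hqj : q.comp Z.subtypeL = ContinuousLinearMap.id ℝ Z := by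
    ext z; simp [q, hsymmZ z]
  have hpj : p.comp Z.subtypeL = 0 := by
    ext z; simp [p, hsymmZ z]
  have hqi : q.comp Y.subtypeL = 0 := by
    ext y; simp [q, hsymmY y]
  have hsum : Y.subtypeL.comp p + Z.subtypeL.comp q = ContinuousLinearMap.id ℝ X := by
    ext x
    have : (↑(e.symm x).1 : X) + ↑(e.symm x).2 = x := by
      have := e.apply_symm_apply x
      rw [he] at this
      simpa [hf] using this
    simpa [p, q] using this
  -- the quotient equivalence
  let QY := (StrongDual ℝ (StrongDual ℝ Y)) ⧸ LinearMap.range (inclusionInDoubleDual ℝ Y).toLinearMap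
  let QZ := (StrongDual ℝ (StrongDual ℝ Z)) ⧸ LinearMap.range (inclusionInDoubleDual ℝ Z).toLinearMap
  let QX := (StrongDual ℝ (StrongDual ℝ X)) ⧸ LinearMap.range (inclusionInDoubleDual ℝ X).toLinearMap
  let eq : QX ≃ₗ[ℝ] QY × QZ :=
    LinearEquiv.ofLinear ((qmap p).prod (qmap q)) ((qmap Y.subtypeL).coprod (qmap Z.subtypeL))
      (by
        apply LinearMap.ext
        rintro ⟨a, b⟩
        obtain ⟨Φ, rfl⟩ := Submodule.Quotient.mk_surjective _ a
        obtain ⟨Ψ, rfl⟩ := Submodule.Quotient.mk_surjective _ b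
        simp only [LinearMap.comp_apply, LinearMap.coprod_apply, LinearMap.prod_apply,
          Function.prod, LinearMap.id_apply]
        rw [qmap_mk, qmap_mk, ← Submodule.Quotient.mk_add, qmap_mk, qmap_mk]
        have h1 : bid p (bid Y.subtypeL Φ + bid Z.subtypeL Ψ) = Φ := by
          rw [map_add, ← ContinuousLinearMap.comp_apply, ← ContinuousLinearMap.comp_apply,
            ← bid_comp, ← bid_comp, hpi, hpj, bid_id, bid_zero]
          simp
        have h2 : bid q (bid Y.subtypeL Φ + bid Z.subtypeL Ψ) = Ψ := by
          rw [map_add, ← ContinuousLinearMap.comp_apply, ← ContinuousLinearMap.comp_apply,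
            ← bid_comp, ← bid_comp, hqi, hqj, bid_id, bid_zero]
          simp
        rw [h1, h2])
      (by
        apply LinearMap.ext
        intro u
        obtain ⟨Φ, rfl⟩ := Submodule.Quotient.mk_surjective _ u
        simp only [LinearMap.comp_apply, LinearMap.prod_apply, Function.prod, LinearMap.coprod_apply,
          LinearMap.id_apply]
        rw [qmap_mk, qmap_mk, qmap_mk, qmap_mk, ← Submodule.Quotient.mk_add]
        congr 1
        rw [← ContinuousLinearMap.comp_apply, ← ContinuousLinearMap.comp_apply,
          ← bid_comp, ← bid_comp, ← ContinuousLinearMap.add_apply, ← bid_add, hsum, bid_id]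
        rfl)
  have hranks : Module.rank ℝ QY + Module.rank ℝ QZ = 1 := by
    have := eq.rank_eq
    rw [hX] at this
    rw [← rank_prod']
    exact this.symm
  have key : ∀ (W : Type _) [NormedAddCommGroup W] [NormedSpace ℝ W],
      Module.rank ℝ ((StrongDual ℝ (StrongDual ℝ W)) ⧸ LinearMap.range (inclusionInDoubleDual ℝ W).toLinearMap) = 0
      ↔ Function.Surjective (inclusionInDoubleDual ℝ W) := by
    intro W _ _
    rw [rank_zero_iff]
    exact (Submodule.Quotient.subsingleton_iff (p := _)).trans LinearMap.range_eq_top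
  have hYle : Module.rank ℝ QY ≤ 1 := by
    rw [← hranks]; exact self_le_add_right _ _
  by_cases hY0 : Module.rank ℝ QY = 0
  · left
    have hZ1 : Module.rank ℝ QZ = 1 := by rw [hY0, zero_add] at hranks; exact hranks
    refine ⟨(key Y).1 hY0, ?_, hZ1⟩
    intro hZsurj
    have := (key Z).2 hZsurj
    rw [this] at hZ1
    exact zero_ne_one hZ1
  · right
    have hY1 : Module.rank ℝ QY = 1 := by
      rcases lt_or_eq_of_le hYle with h | h
      · exact absurd (Cardinal.lt_one_iff_zero.1 h) hY0
      · exact h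
    have hZ0 : Module.rank ℝ QZ = 0 := by
      rw [hY1] at hranks
      by_contra hne
      have h1 : (1 : Cardinal) ≤ Module.rank ℝ QZ := Cardinal.one_le_iff_ne_zero.2 hne
      have : (1 : Cardinal) + 1 ≤ 1 + Module.rank ℝ QZ := add_le_add le_rfl h1
      rw [hranks] at this
      norm_num at this
    refine ⟨?_, (key Z).1 hZ0, hY1⟩
    intro hYsurj
    have := (key Y).2 hYsurj
    rw [this] at hY1
    exact zero_ne_one hY1
end
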